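/- In ℤ^d, d ≥ 3, let K = B(0, L) be the ℓ^∞-ball of radius L ≥ 100 and let z₁, z₂ be two distinct points of the exterior boundary ∂_ext K. Then there exists a set U ⊆ K ∪ {z₁, z₂} containing a nearest-neighbor path joining z₁ and z₂, such that the complement 𝒮 = (K ∪ ∂_ext K) \ U is connected in the nearest-neighbor graph. -/

import Mathlib

/-- The nearest-neighbor graph on `ℤ^d`: `x ~ y` iff the Euclidean distance
between `x` and `y` is `1`. -/
def ZdGraph (d : ℕ) : SimpleGraph (Fin d → ℤ) where
  Adj x y := ∑ i, (x i - y i) ^ 2 = 1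
  symm := by
    constructor
    intro x y h
    beta_reduce at h ⊢
    rw [← h]
    exact Finset.sum_congr rfl fun i _ => by ring
  loopless := by constructor; intro x h; simp at h

namespace ExCor

variable {d : ℕ}

lemma adj_iff {x y : Fin d → ℤ} :
    (ZdGraph d).Adj x y ↔ ∃ p, (x p - y p) ^ 2 = 1 ∧ ∀ q, q ≠ p → x q = y q := by
  constructor
  · intro h
    have h' : ∑ i, (x i - y i) ^ 2 = 1 := h
    have hnn : ∀ i : Fin d, 0 ≤ (x i - y i) ^ 2 := fun i => sq_nonneg _
    have hex : ∃ p : Fin d, (x p - y p) ^ 2 ≠ 0 := by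
      by_contra hc
      push_neg at hc
      rw [Finset.sum_eq_zero (fun i _ => hc i)] at h'
      exact one_ne_zero h'.symm
    obtain ⟨p, hp⟩ := hex
    have h1 : (x p - y p) ^ 2 ≤ 1 := by
      rw [← h']
      exact Finset.single_le_sum (fun i _ => hnn i) (Finset.mem_univ p)
    have h2 : 1 ≤ (x p - y p) ^ 2 := by
      rcases lt_or_eq_of_le (hnn p) with h | h
      · omega
      · exact absurd h.symm hp
    have hpeq : (x p - y p) ^ 2 = 1 := le_antisymm h1 h2
    refine ⟨p, hpeq, fun q hq => ?_⟩
    rw [← Finset.sum_erase_add _ _ (Finset.mem_univ p)] at h'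
    have hrest : ∑ i ∈ Finset.univ.erase p, (x i - y i) ^ 2 = 0 := by omega
    have := (Finset.sum_eq_zero_iff_of_nonneg (fun i _ => hnn i)).mp hrest q
      (Finset.mem_erase.mpr ⟨hq, Finset.mem_univ q⟩)
    have : x q - y q = 0 := by nlinarith [this]
    omega
  · rintro ⟨p, hp, hq⟩
    show ∑ i, (x i - y i) ^ 2 = 1
    rw [Finset.sum_eq_single p]
    · exact hp
    · intro q _ hqp
      rw [hq q hqp]; ring
    · intro h; exact absurd (Finset.mem_univ p) h

lemma adj_of_update {x : Fin d → ℤ} {p : Fin d} {c : ℤ} (h : (x p - c) ^ 2 = 1) :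
    (ZdGraph d).Adj x (Function.update x p c) := by
  rw [adj_iff]
  exact ⟨p, by simp [h], fun q hq => by simp [Function.update_of_ne hq]⟩

lemma adj_close {x y : Fin d → ℤ} (h : (ZdGraph d).Adj x y) (i : Fin d) :
    |x i - y i| ≤ 1 := by
  rw [adj_iff] at h
  obtain ⟨p, hp, hq⟩ := h
  by_cases hip : i = p
  · subst hip
    rw [pow_two] at hp
    rcases mul_self_eq_one_iff.mp hp with h | h <;> rw [h] <;> decide
  · rw [hq i hip]; simp

/-- Reachability within the induced subgraph on `S`. -/
def Reach (S : Set (Fin d → ℤ)) (x y : Fin d → ℤ) : Prop :=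
  ∃ (hx : x ∈ S) (hy : y ∈ S), ((ZdGraph d).induce S).Reachable ⟨x, hx⟩ ⟨y, hy⟩

lemma Reach.refl {S : Set (Fin d → ℤ)} {x : Fin d → ℤ} (hx : x ∈ S) : Reach S x x :=
  ⟨hx, hx, SimpleGraph.Reachable.refl _⟩

lemma Reach.symm {S : Set (Fin d → ℤ)} {x y : Fin d → ℤ} (h : Reach S x y) : Reach S y x := by
  obtain ⟨hx, hy, h⟩ := h
  exact ⟨hy, hx, h.symm⟩

lemma Reach.trans {S : Set (Fin d → ℤ)} {x y z : Fin d → ℤ} (h₁ : Reach S x y)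
    (h₂ : Reach S y z) : Reach S x z := by
  obtain ⟨hx, hy, h₁⟩ := h₁
  obtain ⟨hy', hz, h₂⟩ := h₂
  exact ⟨hx, hz, h₁.trans h₂⟩

lemma Reach.step {S : Set (Fin d → ℤ)} {x y : Fin d → ℤ} (hx : x ∈ S) (hy : y ∈ S)
    (h : (ZdGraph d).Adj x y) : Reach S x y :=
  ⟨hx, hy, SimpleGraph.Adj.reachable (by exact h)⟩

lemma Reach.inS_left {S : Set (Fin d → ℤ)} {x y : Fin d → ℤ} (h : Reach S x y) : x ∈ S :=
  h.1

lemma Reach.inS_right {S : Set (Fin d → ℤ)} {x y : Fin d → ℤ} (h : Reach S x y) : y ∈ S :=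
  h.2.1

/-- Being between two values. -/
def Btw (a b c : ℤ) : Prop := (a ≤ b ∧ b ≤ c) ∨ (c ≤ b ∧ b ≤ a)

lemma btw_left (a c : ℤ) : Btw a a c := by unfold Btw; omega
lemma btw_right (a c : ℤ) : Btw a c c := by unfold Btw; omega

/-- Any two points of a "rectangle" contained in `S` are connected inside `S`. -/
lemma box_reach {S : Set (Fin d → ℤ)} {x y : Fin d → ℤ}
    (h : ∀ w, (∀ i, Btw (x i) (w i) (y i)) → w ∈ S) : Reach S x y := by
  obtain ⟨n, hn⟩ : ∃ n, ∑ i, (y i - x i).natAbs = n := ⟨_, rfl⟩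
  induction n generalizing x with
  | zero =>
    have : x = y := by
      funext i
      have h0 : (y i - x i).natAbs = 0 := by
        have := Finset.sum_eq_zero_iff.mp hn i (Finset.mem_univ i)
        omega
      omega
    subst this
    exact Reach.refl (h x (fun i => btw_left _ _))
  | succ n ih =>
    have hex : ∃ i, x i ≠ y i := by
      by_contra hc
      push_neg at hc
      have : ∑ i, (y i - x i).natAbs = 0 :=
        Finset.sum_eq_zero (fun i _ => by rw [hc i]; simp)
      omega
    obtain ⟨i, hi⟩ := hex
    set δ : ℤ := if x i < y i then 1 else -1 with hδ
    set x' := Function.update x i (x i + δ) with hx'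
    have hxS : x ∈ S := h x (fun j => btw_left _ _)
    have hbtw : ∀ j, Btw (x j) (x' j) (y j) := by
      intro j
      by_cases hj : j = i
      · subst hj
        simp only [hx', Function.update_self]
        unfold δ
        unfold Btw; split_ifs <;> omega
      · simp only [hx', Function.update_of_ne hj]
        exact btw_left _ _
    have hx'S : x' ∈ S := h x' hbtw
    have hadj : (ZdGraph d).Adj x x' := by
      apply adj_of_update
      unfold δ
      split_ifs <;> ring
    have hsub : ∀ w, (∀ j, Btw (x' j) (w j) (y j)) → w ∈ S := by
      intro w hw
      apply h
      intro j
      by_cases hj : j = i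
      · subst hj
        have := hw j
        simp only [hx', Function.update_self] at this
        unfold δ at this
        unfold Btw at this ⊢
        split_ifs at this <;> omega
      · have := hw j
        simpa only [hx', Function.update_of_ne hj] using this
    have hsum : ∑ j, (y j - x' j).natAbs = n := by
      have key : ∀ j, j ≠ i → (y j - x' j).natAbs = (y j - x j).natAbs := by
        intro j hj
        simp [hx', Function.update_of_ne hj]
      have hix : (y i - x' i).natAbs + 1 = (y i - x i).natAbs := by
        simp only [hx', Function.update_self]
        unfold δ
        split_ifs <;> omega
      rw [← Finset.sum_erase_add _ _ (Finset.mem_univ i)]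
      rw [← Finset.sum_erase_add _ _ (Finset.mem_univ i)] at hn
      have e3 : ∑ j ∈ Finset.univ.erase i, (y j - x' j).natAbs
          = ∑ j ∈ Finset.univ.erase i, (y j - x j).natAbs :=
        Finset.sum_congr rfl (fun j hj => key j (Finset.mem_erase.mp hj).1)
      omega
    exact (Reach.step hxS hx'S hadj).trans (ih hsub hsum)

/-- Pigeonhole: given an injective family of `k` candidates and `m < k` "kill reasons",
each killing at most one candidate, some candidate survives. -/
lemma pick_free {α : Type*} {k m : ℕ} (g : Fin k → α) (inj : Function.Injective g)
    (R : Fin m → α → Prop)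
    (hsub : ∀ t i j, R t (g i) → R t (g j) → i = j)
    (hm : m < k) : ∃ i, ∀ t, ¬ R t (g i) := by
  by_contra hc
  push_neg at hc
  choose f hf using hc
  obtain ⟨i, j, hij, hfij⟩ := Fintype.exists_ne_map_eq_of_card_lt f (by simpa using hm)
  exact hij (hsub (f i) i j (hf i) (hfij ▸ hf j))



/-! ### Context bundling the two boundary points -/

structure Ctx (d L : ℕ) : Type where
  hd : 3 ≤ d
  hL : 100 ≤ L
  z₁ : Fin d → ℤ
  z₂ : Fin d → ℤ
  p₁ : Fin d
  p₂ : Fin d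
  s₁ : ℤ
  s₂ : ℤ
  hs₁ : s₁ = 1 ∨ s₁ = -1
  hs₂ : s₂ = 1 ∨ s₂ = -1
  hzp₁ : z₁ p₁ = s₁ * ((L : ℤ) + 1)
  hzp₂ : z₂ p₂ = s₂ * ((L : ℤ) + 1)
  hzo₁ : ∀ q, q ≠ p₁ → |z₁ q| ≤ (L : ℤ)
  hzo₂ : ∀ q, q ≠ p₂ → |z₂ q| ≤ (L : ℤ)

/-- A face of the exterior boundary. -/
def Face (L : ℕ) (j : Fin d) (σ : ℤ) (x : Fin d → ℤ) : Prop :=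
  x j = σ * ((L : ℤ) + 1) ∧ ∀ i, i ≠ j → |x i| ≤ (L : ℤ)

/-- A corner of the box. -/
def Corner (L : ℕ) (c : Fin d → ℤ) : Prop := ∀ i, c i = (L : ℤ) ∨ c i = -(L : ℤ)

namespace Ctx

variable {d L : ℕ} (C : Ctx d L)

def n₁ : Fin d → ℤ := Function.update C.z₁ C.p₁ (C.s₁ * L)
def n₂ : Fin d → ℤ := Function.update C.z₂ C.p₂ (C.s₂ * L)

/-- Surviving corners. -/
def Good (c : Fin d → ℤ) : Prop := Corner L c ∧ c ≠ C.n₁ ∧ c ≠ C.n₂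

def Z (x : Fin d → ℤ) : Prop := x = C.z₁ ∨ x = C.z₂

/-- The complement set. -/
def S : Set (Fin d → ℤ) :=
  {x | C.Good x ∨ ((∃ j σ, (σ = 1 ∨ σ = -1) ∧ Face L j σ x) ∧ ¬ C.Z x)}

lemma z₁_face : Face L C.p₁ C.s₁ C.z₁ := ⟨C.hzp₁, C.hzo₁⟩
lemma z₂_face : Face L C.p₂ C.s₂ C.z₂ := ⟨C.hzp₂, C.hzo₂⟩

end Ctx

section FaceBasics

variable {d L : ℕ}

lemma face_big {j : Fin d} {σ : ℤ} (hσ : σ = 1 ∨ σ = -1) {x : Fin d → ℤ}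
    (hx : Face L j σ x) : |x j| = (L : ℤ) + 1 := by
  rcases hσ with h | h <;> subst h <;> rw [hx.1]
  · rw [one_mul]; exact abs_of_nonneg (by positivity)
  · rw [neg_one_mul, abs_neg]; exact abs_of_nonneg (by positivity)

lemma face_coord_eq {j j' : Fin d} {σ σ' : ℤ} (hσ : σ = 1 ∨ σ = -1) (hσ' : σ' = 1 ∨ σ' = -1)
    {x : Fin d → ℤ} (hx : Face L j σ x) (hx' : Face L j' σ' x) : j = j' ∧ σ = σ' := by
  have hj : j = j' := by
    by_contra h
    have h1 := face_big hσ hx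
    have h2 := hx'.2 j h
    omega
  subst hj
  refine ⟨rfl, ?_⟩
  have e1 := hx.1
  have e2 := hx'.1
  rcases hσ with h | h <;> rcases hσ' with h' | h' <;> subst h <;> subst h' <;> omega

/-- Two indices different from a given one. -/
lemma two_other (hd : 3 ≤ d) (j : Fin d) : ∃ a b : Fin d, a ≠ b ∧ a ≠ j ∧ b ≠ j := by
  have h1 : 1 < (Finset.univ.erase j).card := by
    rw [Finset.card_erase_of_mem (Finset.mem_univ j)]
    simp only [Finset.card_univ, Fintype.card_fin]
    omega
  obtain ⟨a, b, ha, hb, hab⟩ := Finset.one_lt_card_iff.mp h1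
  exact ⟨a, b, hab, (Finset.mem_erase.mp ha).1, (Finset.mem_erase.mp hb).1⟩

/-- A value in `[0,2]` different from two given values. -/
lemma safe_val (a b : ℤ) : ∃ u : ℤ, 0 ≤ u ∧ u ≤ 2 ∧ u ≠ a ∧ u ≠ b := by
  refine ⟨if (0 = a ∨ 0 = b) then (if (1 = a ∨ 1 = b) then 2 else 1) else 0, ?_⟩
  split_ifs with h1 h2 <;> exact ⟨by omega, by omega, by omega, by omega⟩

end FaceBasics

section FaceMoves

variable {d L : ℕ}

lemma face_update {j : Fin d} {σ : ℤ} {x : Fin d → ℤ} (hx : Face L j σ x)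
    {i : Fin d} (hij : i ≠ j) {c : ℤ} (hc : |c| ≤ (L : ℤ)) :
    Face L j σ (Function.update x i c) := by
  constructor
  · rw [Function.update_of_ne (Ne.symm hij)]; exact hx.1
  · intro t ht
    by_cases hti : t = i
    · subst hti; rw [Function.update_self]; exact hc
    · rw [Function.update_of_ne hti]; exact hx.2 t ht

lemma adj_step (x : Fin d → ℤ) (i : Fin d) {δ : ℤ} (hδ : δ = 1 ∨ δ = -1) :
    (ZdGraph d).Adj x (Function.update x i (x i + δ)) :=
  adj_of_update (by rcases hδ with h | h <;> subst h <;> ring)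

namespace Ctx

variable {d L : ℕ}

lemma mem_S_face (C : Ctx d L) {j : Fin d} {σ : ℤ} {x : Fin d → ℤ} (hσ : σ = 1 ∨ σ = -1)
    (hx : Face L j σ x) (h1 : x ≠ C.z₁) (h2 : x ≠ C.z₂) : x ∈ C.S :=
  Or.inr ⟨⟨j, σ, hσ, hx⟩, by rintro (h | h) <;> [exact h1 h; exact h2 h]⟩

lemma mem_S_good (C : Ctx d L) {c : Fin d → ℤ} (h : C.Good c) : c ∈ C.S := Or.inl h

def Untrapped (C : Ctx d L) (j : Fin d) (σ : ℤ) (x : Fin d → ℤ) : Prop :=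
  ∃ w, Face L j σ w ∧ w ≠ C.z₁ ∧ w ≠ C.z₂ ∧ (ZdGraph d).Adj x w

lemma two_nbrs (C : Ctx d L) {j : Fin d} {σ : ℤ} {x : Fin d → ℤ} (hx : Face L j σ x) :
    ∃ w₁ w₂, w₁ ≠ w₂ ∧ Face L j σ w₁ ∧ Face L j σ w₂ ∧
      (ZdGraph d).Adj x w₁ ∧ (ZdGraph d).Adj x w₂ := by
  have hL1 : (1 : ℤ) ≤ (L : ℤ) := by have := C.hL; omega
  obtain ⟨a, b, hab, haj, hbj⟩ := two_other C.hd j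
  have hxa := abs_le.mp (hx.2 a haj)
  have hxb := abs_le.mp (hx.2 b hbj)
  set δa : ℤ := if x a ≤ 0 then 1 else -1 with hda
  set δb : ℤ := if x b ≤ 0 then 1 else -1 with hdb
  have hδa : δa = 1 ∨ δa = -1 := by unfold δa; split_ifs <;> simp
  have hδb : δb = 1 ∨ δb = -1 := by unfold δb; split_ifs <;> simp
  refine ⟨Function.update x a (x a + δa), Function.update x b (x b + δb), ?_, ?_, ?_, ?_, ?_⟩
  · intro h
    have := congrFun h a
    rw [Function.update_self, Function.update_of_ne hab] at this
    rcases hδa with h' | h' <;> omega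
  · refine face_update hx haj ?_
    rw [abs_le]; unfold δa; split_ifs <;> omega
  · refine face_update hx hbj ?_
    rw [abs_le]; unfold δb; split_ifs <;> omega
  · exact adj_step x a hδa
  · exact adj_step x b hδb

lemma untrapped_of (C : Ctx d L) {j : Fin d} {σ : ℤ} {x : Fin d → ℤ} (hx : Face L j σ x)
    (h : ¬(Face L j σ C.z₁ ∧ Face L j σ C.z₂)) : C.Untrapped j σ x := by
  obtain ⟨w₁, w₂, hne, hf₁, hf₂, ha₁, ha₂⟩ := C.two_nbrs hx
  by_cases h1 : w₁ = C.z₁ ∨ w₁ = C.z₂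
  · by_cases h2 : w₂ = C.z₁ ∨ w₂ = C.z₂
    · exfalso
      apply h
      rcases h1 with h1 | h1 <;> rcases h2 with h2 | h2
      · exact absurd (h1.trans h2.symm) hne
      · exact ⟨h1 ▸ hf₁, h2 ▸ hf₂⟩
      · exact ⟨h2 ▸ hf₂, h1 ▸ hf₁⟩
      · exact absurd (h1.trans h2.symm) hne
    · push_neg at h2
      exact ⟨w₂, hf₂, h2.1, h2.2, ha₂⟩
  · push_neg at h1
    exact ⟨w₁, hf₁, h1.1, h1.2, ha₁⟩

end Ctx

/-- The hub target point in a face. -/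
def Tpt (L : ℕ) (j a b : Fin d) (σ u v : ℤ) : Fin d → ℤ :=
  fun i => if i = j then σ * ((L : ℤ) + 1) else if i = a then u else if i = b then v else 0

namespace Ctx

variable {d L : ℕ}

lemma tpt_face {j a b : Fin d} {σ u v : ℤ} (hL : 100 ≤ L) (haj : a ≠ j) (hbj : b ≠ j)
    (hu : 0 ≤ u ∧ u ≤ 2) (hv : 0 ≤ v ∧ v ≤ 2) :
    Face L j σ (Tpt L j a b σ u v) := by
  have hL1 : (1 : ℤ) ≤ (L : ℤ) := by omega
  constructor
  · simp [Tpt]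
  · intro i hij
    simp only [Tpt, if_neg hij]
    split_ifs <;> rw [abs_le] <;> omega

/-- Reach the hub from any point of the face lying on one of the two safe lines. -/
lemma reach_T (C : Ctx d L) {j a b : Fin d} {σ u v : ℤ}
    (hσ : σ = 1 ∨ σ = -1) (hab : a ≠ b) (haj : a ≠ j) (hbj : b ≠ j)
    (hu : 0 ≤ u ∧ u ≤ 2 ∧ u ≠ C.z₁ a ∧ u ≠ C.z₂ a)
    (hv : 0 ≤ v ∧ v ≤ 2 ∧ v ≠ C.z₁ b ∧ v ≠ C.z₂ b)
    {x : Fin d → ℤ} (hx : Face L j σ x) (hon : x a = u ∨ x b = v) :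
    Reach C.S x (Tpt L j a b σ u v) := by
  have hL2 : (2 : ℤ) ≤ (L : ℤ) := by have := C.hL; omega
  apply box_reach
  intro w hw
  have hT := tpt_face (j := j) (a := a) (b := b) (σ := σ) (u := u) (v := v) C.hL haj hbj
    ⟨hu.1, hu.2.1⟩ ⟨hv.1, hv.2.1⟩
  have hfw : Face L j σ w := by
    constructor
    · have := hw j
      rw [hx.1] at this
      have h2 : Tpt L j a b σ u v j = σ * ((L : ℤ) + 1) := by simp [Tpt]
      rw [h2] at this
      unfold Btw at this; omega
    · intro i hij
      have := hw i
      have h1 := abs_le.mp (hx.2 i hij)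
      have h2 := abs_le.mp (hT.2 i hij)
      unfold Btw at this; rw [abs_le]; omega
  have hne₁ : w ≠ C.z₁ := by
    rcases hon with hon | hon
    · intro h
      have := hw a
      rw [hon] at this
      have h2 : Tpt L j a b σ u v a = u := by simp [Tpt, if_neg haj]
      rw [h2] at this
      have : w a = u := by unfold Btw at this; omega
      exact hu.2.2.1 (by rw [← this, h])
    · intro h
      have := hw b
      rw [hon] at this
      have h2 : Tpt L j a b σ u v b = v := by
        simp [Tpt, if_neg hbj, if_neg (Ne.symm hab)]
      rw [h2] at this
      have : w b = v := by unfold Btw at this; omega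
      exact hv.2.2.1 (by rw [← this, h])
  have hne₂ : w ≠ C.z₂ := by
    rcases hon with hon | hon
    · intro h
      have := hw a
      rw [hon] at this
      have h2 : Tpt L j a b σ u v a = u := by simp [Tpt, if_neg haj]
      rw [h2] at this
      have : w a = u := by unfold Btw at this; omega
      exact hu.2.2.2 (by rw [← this, h])
    · intro h
      have := hw b
      rw [hon] at this
      have h2 : Tpt L j a b σ u v b = v := by
        simp [Tpt, if_neg hbj, if_neg (Ne.symm hab)]
      rw [h2] at this
      have : w b = v := by unfold Btw at this; omega
      exact hv.2.2.2 (by rw [← this, h])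
  exact C.mem_S_face hσ hfw hne₁ hne₂

/-- Straight move in coordinate `a` to the hub, when the `a`-line through `y` is clear. -/
lemma line_to_T_a (C : Ctx d L) {j a b : Fin d} {σ u v : ℤ}
    (hσ : σ = 1 ∨ σ = -1) (hab : a ≠ b) (haj : a ≠ j) (hbj : b ≠ j)
    (hu : 0 ≤ u ∧ u ≤ 2 ∧ u ≠ C.z₁ a ∧ u ≠ C.z₂ a)
    (hv : 0 ≤ v ∧ v ≤ 2 ∧ v ≠ C.z₁ b ∧ v ≠ C.z₂ b)
    {y : Fin d → ℤ} (hy : Face L j σ y)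
    (hclear : ∀ w, Face L j σ w → (∀ i, i ≠ a → w i = y i) → w ≠ C.z₁ ∧ w ≠ C.z₂) :
    Reach C.S y (Tpt L j a b σ u v) := by
  have hL1 : (2 : ℤ) ≤ (L : ℤ) := by have := C.hL; omega
  have hfaceW : ∀ w, (∀ i, Btw (y i) (w i) (Function.update y a u i)) → Face L j σ w := by
    intro w hw
    have hpin : ∀ i, i ≠ a → w i = y i := by
      intro i hia
      have := hw i
      rw [Function.update_of_ne hia] at this
      unfold Btw at this; omega
    constructor
    · rw [hpin j (Ne.symm haj)]; exact hy.1
    · intro i hij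
      by_cases hia : i = a
      · subst hia
        have := hw i
        rw [Function.update_self] at this
        have hya := abs_le.mp (hy.2 i hij)
        unfold Btw at this; rw [abs_le]; omega
      · rw [hpin i hia]; exact hy.2 i hij
  have h1 : Reach C.S y (Function.update y a u) := by
    apply box_reach
    intro w hw
    have hfw := hfaceW w hw
    have hpin : ∀ i, i ≠ a → w i = y i := by
      intro i hia
      have := hw i
      rw [Function.update_of_ne hia] at this
      unfold Btw at this; omega
    obtain ⟨h1, h2⟩ := hclear w hfw hpin
    exact C.mem_S_face hσ hfw h1 h2
  have h2 : Reach C.S (Function.update y a u) (Tpt L j a b σ u v) := by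
    apply C.reach_T hσ hab haj hbj hu hv
      (face_update hy haj (by rw [abs_le]; omega))
    left; rw [Function.update_self]
  exact h1.trans h2


/-- Straight move in coordinate `b` to the hub, when the `b`-line through `y` is clear. -/
lemma line_to_T_b (C : Ctx d L) {j a b : Fin d} {σ u v : ℤ}
    (hσ : σ = 1 ∨ σ = -1) (hab : a ≠ b) (haj : a ≠ j) (hbj : b ≠ j)
    (hu : 0 ≤ u ∧ u ≤ 2 ∧ u ≠ C.z₁ a ∧ u ≠ C.z₂ a)
    (hv : 0 ≤ v ∧ v ≤ 2 ∧ v ≠ C.z₁ b ∧ v ≠ C.z₂ b)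
    {y : Fin d → ℤ} (hy : Face L j σ y)
    (hclear : ∀ w, Face L j σ w → (∀ i, i ≠ b → w i = y i) → w ≠ C.z₁ ∧ w ≠ C.z₂) :
    Reach C.S y (Tpt L j a b σ u v) := by
  have hL1 : (2 : ℤ) ≤ (L : ℤ) := by have := C.hL; omega
  have hfaceW : ∀ w, (∀ i, Btw (y i) (w i) (Function.update y b v i)) → Face L j σ w := by
    intro w hw
    have hpin : ∀ i, i ≠ b → w i = y i := by
      intro i hib
      have := hw i
      rw [Function.update_of_ne hib] at this
      unfold Btw at this; omega
    constructor
    · rw [hpin j (Ne.symm hbj)]; exact hy.1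
    · intro i hij
      by_cases hib : i = b
      · subst hib
        have := hw i
        rw [Function.update_self] at this
        have hyb := abs_le.mp (hy.2 i hij)
        unfold Btw at this; rw [abs_le]; omega
      · rw [hpin i hib]; exact hy.2 i hij
  have h1 : Reach C.S y (Function.update y b v) := by
    apply box_reach
    intro w hw
    have hfw := hfaceW w hw
    have hpin : ∀ i, i ≠ b → w i = y i := by
      intro i hib
      have := hw i
      rw [Function.update_of_ne hib] at this
      unfold Btw at this; omega
    obtain ⟨h1, h2⟩ := hclear w hfw hpin
    exact C.mem_S_face hσ hfw h1 h2
  have h2 : Reach C.S (Function.update y b v) (Tpt L j a b σ u v) := by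
    apply C.reach_T hσ hab haj hbj hu hv
      (face_update hy hbj (by rw [abs_le]; omega))
    right; rw [Function.update_self]
  exact h1.trans h2

/-- The escape lemma: from any point of the face avoiding the two obstacles,
one can reach the hub, provided the point is not trapped. -/
lemma escape (C : Ctx d L) {j a b : Fin d} {σ u v : ℤ}
    (hσ : σ = 1 ∨ σ = -1) (hab : a ≠ b) (haj : a ≠ j) (hbj : b ≠ j)
    (hu : 0 ≤ u ∧ u ≤ 2 ∧ u ≠ C.z₁ a ∧ u ≠ C.z₂ a)
    (hv : 0 ≤ v ∧ v ≤ 2 ∧ v ≠ C.z₁ b ∧ v ≠ C.z₂ b)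
    {x : Fin d → ℤ} (hx : Face L j σ x) (hxz₁ : x ≠ C.z₁) (hxz₂ : x ≠ C.z₂)
    (hxu : C.Untrapped j σ x) :
    Reach C.S x (Tpt L j a b σ u v) := by
  have hL2 : (2 : ℤ) ≤ (L : ℤ) := by have := C.hL; omega
  have hxS : x ∈ C.S := C.mem_S_face hσ hx hxz₁ hxz₂
  by_cases hLa : ∃ z, (z = C.z₁ ∨ z = C.z₂) ∧ (∀ i, i ≠ a → z i = x i)
  · by_cases hLb : ∃ z, (z = C.z₁ ∨ z = C.z₂) ∧ (∀ i, i ≠ b → z i = x i)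
    · -- hard case : both lines blocked
      obtain ⟨zA, hzA, hA⟩ := hLa
      obtain ⟨zB, hzB, hB⟩ := hLb
      have hAx : zA ≠ x := by rcases hzA with h | h <;> subst h <;> exact Ne.symm ‹_›
      have hBx : zB ≠ x := by rcases hzB with h | h <;> subst h <;> exact Ne.symm ‹_›
      have hABne : zA ≠ zB := by
        intro h
        apply hBx
        funext i
        by_cases hia : i = a
        · subst hia; exact hB i (fun hh => hab (hh ▸ rfl))
        · rw [← h]; exact hA i hia
      have cover : ∀ w, w ≠ zA → w ≠ zB → w ≠ C.z₁ ∧ w ≠ C.z₂ := by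
        intro w h1 h2
        rcases hzA with h | h <;> rcases hzB with h' | h'
        · exact absurd (h.trans h'.symm) hABne
        · exact ⟨h ▸ h1, h' ▸ h2⟩
        · exact ⟨h' ▸ h2, h ▸ h1⟩
        · exact absurd (h.trans h'.symm) hABne
      set k : ℤ := zA a - x a with hkdef
      set l : ℤ := zB b - x b with hldef
      have hk : k ≠ 0 := by
        intro h
        apply hAx
        funext i
        by_cases hia : i = a
        · subst hia; omega
        · exact hA i hia
      have hl : l ≠ 0 := by
        intro h
        apply hBx
        funext i
        by_cases hib : i = b
        · subst hib; omega
        · exact hB i hib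
      set δ : ℤ := if 0 < l then 1 else -1 with hδdef
      set ε : ℤ := if 0 < k then 1 else -1 with hεdef
      have hδ : (0 < l ∧ δ = 1) ∨ (l < 0 ∧ δ = -1) := by
        unfold δ; split_ifs with h <;> omega
      have hε : (0 < k ∧ ε = 1) ∨ (k < 0 ∧ ε = -1) := by
        unfold ε; split_ifs with h <;> omega
      have hδ1 : δ = 1 ∨ δ = -1 := by omega
      have hε1 : ε = 1 ∨ ε = -1 := by omega
      have hxa := abs_le.mp (hx.2 a haj)
      have hxb := abs_le.mp (hx.2 b hbj)
      have hzAa : zA a = x a + k := by omega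
      have hzBb : zB b = x b + l := by omega
      have hzAoff : ∀ i, i ≠ a → zA i = x i := hA
      have hzBoff : ∀ i, i ≠ b → zB i = x i := hB
      by_cases hC1 : -(L : ℤ) ≤ x b - δ ∧ x b - δ ≤ (L : ℤ)
      · -- step away from zB in the b-direction, then straight a-move
        set x' := Function.update x b (x b - δ) with hx'def
        have hfx' : Face L j σ x' := face_update hx hbj (abs_le.mpr hC1)
        have hx'b : x' b = x b - δ := Function.update_self _ _ _
        have hx'A : x' ≠ zA := by
          intro h
          have h2 := congrFun h b
          rw [hx'b, hzAoff b (Ne.symm hab)] at h2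
          omega
        have hx'B : x' ≠ zB := by
          intro h
          have h2 := congrFun h b
          rw [hx'b, hzBb] at h2
          omega
        have hx'S : x' ∈ C.S := by
          have hc := cover x' hx'A hx'B
          exact C.mem_S_face hσ hfx' hc.1 hc.2
        have hadj : (ZdGraph d).Adj x x' := by
          rw [hx'def]
          have h2 : x b - δ = x b + (-δ) := by ring
          rw [h2]
          exact adj_step x b (by omega)
        refine (Reach.step hxS hx'S hadj).trans ?_
        apply C.line_to_T_a hσ hab haj hbj hu hv hfx'
        intro w hfw hpin
        refine cover w ?_ ?_
        · intro h
          have h2 := hpin b (Ne.symm hab)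
          rw [h, hzAoff b (Ne.symm hab), hx'b] at h2
          omega
        · intro h
          have h2 := hpin b (Ne.symm hab)
          rw [h, hzBb, hx'b] at h2
          omega
      · by_cases hC2 : -(L : ℤ) ≤ x a - ε ∧ x a - ε ≤ (L : ℤ)
        · -- step away from zA in the a-direction, then straight b-move
          set x' := Function.update x a (x a - ε) with hx'def
          have hfx' : Face L j σ x' := face_update hx haj (abs_le.mpr hC2)
          have hx'a : x' a = x a - ε := Function.update_self _ _ _
          have hx'A : x' ≠ zA := by
            intro h
            have h2 := congrFun h a
            rw [hx'a, hzAa] at h2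
            omega
          have hx'B : x' ≠ zB := by
            intro h
            have h2 := congrFun h a
            rw [hx'a, hzBoff a hab] at h2
            omega
          have hx'S : x' ∈ C.S := by
            have hc := cover x' hx'A hx'B
            exact C.mem_S_face hσ hfx' hc.1 hc.2
          have hadj : (ZdGraph d).Adj x x' := by
            rw [hx'def]
            have h2 : x a - ε = x a + (-ε) := by ring
            rw [h2]
            exact adj_step x a (by omega)
          refine (Reach.step hxS hx'S hadj).trans ?_
          apply C.line_to_T_b hσ hab haj hbj hu hv hfx'
          intro w hfw hpin
          refine cover w ?_ ?_
          · intro h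
            have h2 := hpin a hab
            rw [h, hzAa, hx'a] at h2
            omega
          · intro h
            have h2 := hpin a hab
            rw [h, hzBoff a hab, hx'a] at h2
            omega
        · -- both sideways steps blocked by the box boundary
          by_cases hr : ∃ r, r ≠ j ∧ r ≠ a ∧ r ≠ b
          · -- use a third coordinate
            obtain ⟨r, hrj, hra, hrb⟩ := hr
            have hxr := abs_le.mp (hx.2 r hrj)
            set δr : ℤ := if x r ≤ 0 then 1 else -1 with hδrdef
            have hδr : (x r ≤ 0 ∧ δr = 1) ∨ (0 < x r ∧ δr = -1) := by
              unfold δr; split_ifs with h <;> omega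
            set x' := Function.update x r (x r + δr) with hx'def
            have hfx' : Face L j σ x' := face_update hx hrj (abs_le.mpr (by omega))
            have hx'r : x' r = x r + δr := Function.update_self _ _ _
            have hx'A : x' ≠ zA := by
              intro h
              have h2 := congrFun h r
              rw [hx'r, hzAoff r hra] at h2
              omega
            have hx'B : x' ≠ zB := by
              intro h
              have h2 := congrFun h r
              rw [hx'r, hzBoff r hrb] at h2
              omega
            have hx'S : x' ∈ C.S := by
              have hc := cover x' hx'A hx'B
              exact C.mem_S_face hσ hfx' hc.1 hc.2
            have hadj : (ZdGraph d).Adj x x' := by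
              rw [hx'def]
              exact adj_step x r (by omega)
            refine (Reach.step hxS hx'S hadj).trans ?_
            apply C.line_to_T_a hσ hab haj hbj hu hv hfx'
            intro w hfw hpin
            refine cover w ?_ ?_
            · intro h
              have h2 := hpin r hra
              rw [h, hzAoff r hra, hx'r] at h2
              omega
            · intro h
              have h2 := hpin r hra
              rw [h, hzBoff r hrb, hx'r] at h2
              omega
          · -- only three coordinates : analyse trapping
            push_neg at hr
            by_cases hC3 : l = δ
            · by_cases hC4 : k = ε
              · -- the point would be trapped : contradiction with untrappedness
                exfalso
                obtain ⟨w, hwf, hwz₁, hwz₂, hadjw⟩ := hxu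
                rw [adj_iff] at hadjw
                obtain ⟨t, hsq, hrest⟩ := hadjw
                have htj : t ≠ j := by
                  intro h
                  subst h
                  rw [hx.1, hwf.1] at hsq
                  simp at hsq
                have habs : x t - w t = 1 ∨ x t - w t = -1 := by
                  rw [pow_two] at hsq
                  rcases mul_self_eq_one_iff.mp hsq with h | h <;> omega
                have hwoff : ∀ i, i ≠ t → w i = x i := fun i hi => (hrest i hi).symm
                rcases em (t = a) with hta | hta
                · subst hta
                  have hwa := abs_le.mp (hwf.2 t htj)
                  have hwt : w t = x t + ε := by omega
                  have hwzA : w = zA := by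
                    funext i
                    by_cases hia : i = t
                    · subst hia; rw [hwt, hzAa]; omega
                    · rw [hwoff i hia]; exact (hzAoff i hia).symm
                  rcases hzA with h | h <;> rw [h] at hwzA
                  · exact hwz₁ hwzA
                  · exact hwz₂ hwzA
                · have htb : t = b := hr t htj hta
                  subst htb
                  have hwb := abs_le.mp (hwf.2 t htj)
                  have hwt : w t = x t + δ := by omega
                  have hwzB : w = zB := by
                    funext i
                    by_cases hib : i = t
                    · subst hib; rw [hwt, hzBb]; omega
                    · rw [hwoff i hib]; exact (hzBoff i hib).symm
                  rcases hzB with h | h <;> rw [h] at hwzB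
                  · exact hwz₁ hwzB
                  · exact hwz₂ hwzB
              · -- step toward (but not onto) zA
                set x' := Function.update x a (x a + ε) with hx'def
                have hfx' : Face L j σ x' := face_update hx haj (abs_le.mpr (by omega))
                have hx'a : x' a = x a + ε := Function.update_self _ _ _
                have hx'A : x' ≠ zA := by
                  intro h
                  have h2 := congrFun h a
                  rw [hx'a, hzAa] at h2
                  omega
                have hx'B : x' ≠ zB := by
                  intro h
                  have h2 := congrFun h a
                  rw [hx'a, hzBoff a hab] at h2
                  omega
                have hx'S : x' ∈ C.S := by
                  have hc := cover x' hx'A hx'B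
                  exact C.mem_S_face hσ hfx' hc.1 hc.2
                have hadj : (ZdGraph d).Adj x x' := by
                  rw [hx'def]
                  exact adj_step x a (by omega)
                refine (Reach.step hxS hx'S hadj).trans ?_
                apply C.line_to_T_b hσ hab haj hbj hu hv hfx'
                intro w hfw hpin
                refine cover w ?_ ?_
                · intro h
                  have h2 := hpin a hab
                  rw [h, hzAa, hx'a] at h2
                  omega
                · intro h
                  have h2 := hpin a hab
                  rw [h, hzBoff a hab, hx'a] at h2
                  omega
            · -- step toward (but not onto) zB
              set x' := Function.update x b (x b + δ) with hx'def
              have hfx' : Face L j σ x' := face_update hx hbj (abs_le.mpr (by omega))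
              have hx'b : x' b = x b + δ := Function.update_self _ _ _
              have hx'A : x' ≠ zA := by
                intro h
                have h2 := congrFun h b
                rw [hx'b, hzAoff b (Ne.symm hab)] at h2
                omega
              have hx'B : x' ≠ zB := by
                intro h
                have h2 := congrFun h b
                rw [hx'b, hzBb] at h2
                omega
              have hx'S : x' ∈ C.S := by
                have hc := cover x' hx'A hx'B
                exact C.mem_S_face hσ hfx' hc.1 hc.2
              have hadj : (ZdGraph d).Adj x x' := by
                rw [hx'def]
                exact adj_step x b (by omega)
              refine (Reach.step hxS hx'S hadj).trans ?_
              apply C.line_to_T_a hσ hab haj hbj hu hv hfx'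
              intro w hfw hpin
              refine cover w ?_ ?_
              · intro h
                have h2 := hpin b (Ne.symm hab)
                rw [h, hzAoff b (Ne.symm hab), hx'b] at h2
                omega
              · intro h
                have h2 := hpin b (Ne.symm hab)
                rw [h, hzBb, hx'b] at h2
                omega
    · -- b-line clear : straight b-move
      apply C.line_to_T_b hσ hab haj hbj hu hv hx
      intro w hfw hpin
      constructor
      · intro h
        exact hLb ⟨C.z₁, Or.inl rfl, fun i hi => by rw [← h]; exact hpin i hi⟩
      · intro h
        exact hLb ⟨C.z₂, Or.inr rfl, fun i hi => by rw [← h]; exact hpin i hi⟩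
  · apply C.line_to_T_a hσ hab haj hbj hu hv hx
    intro w hfw hpin
    constructor
    · intro h
      exact hLa ⟨C.z₁, Or.inl rfl, fun i hi => by rw [← h]; exact hpin i hi⟩
    · intro h
      exact hLa ⟨C.z₂, Or.inr rfl, fun i hi => by rw [← h]; exact hpin i hi⟩


/-- Face routing: any two non-obstacle, untrapped points of a face are connected in `S`. -/
lemma face_route (C : Ctx d L) {j : Fin d} {σ : ℤ} (hσ : σ = 1 ∨ σ = -1)
    {x y : Fin d → ℤ} (hx : Face L j σ x) (hy : Face L j σ y)
    (hxz₁ : x ≠ C.z₁) (hxz₂ : x ≠ C.z₂) (hyz₁ : y ≠ C.z₁) (hyz₂ : y ≠ C.z₂)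
    (hxu : C.Untrapped j σ x) (hyu : C.Untrapped j σ y) : Reach C.S x y := by
  obtain ⟨a, b, hab, haj, hbj⟩ := two_other C.hd j
  obtain ⟨u, hu1, hu2, hu3, hu4⟩ := safe_val (C.z₁ a) (C.z₂ a)
  obtain ⟨v, hv1, hv2, hv3, hv4⟩ := safe_val (C.z₁ b) (C.z₂ b)
  exact (C.escape hσ hab haj hbj ⟨hu1, hu2, hu3, hu4⟩ ⟨hv1, hv2, hv3, hv4⟩ hx hxz₁ hxz₂ hxu).trans
    (C.escape hσ hab haj hbj ⟨hu1, hu2, hu3, hu4⟩ ⟨hv1, hv2, hv3, hv4⟩ hy hyz₁ hyz₂ hyu).symm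

/-- Projection of a face point down to the box. -/
lemma proj_inj (C : Ctx d L) {j : Fin d} {σ : ℤ} {y y' : Fin d → ℤ}
    (hy : Face L j σ y) (hy' : Face L j σ y')
    (h : Function.update y j (σ * L) = Function.update y' j (σ * L)) : y = y' := by
  funext i
  by_cases hij : i = j
  · subst hij; rw [hy.1, hy'.1]
  · have := congrFun h i
    rwa [Function.update_of_ne hij, Function.update_of_ne hij] at this

lemma adj_proj {j : Fin d} {σ : ℤ} (hσ : σ = 1 ∨ σ = -1) {y : Fin d → ℤ}
    (hy : Face L j σ y) : (ZdGraph d).Adj y (Function.update y j (σ * L)) := by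
  apply adj_of_update
  rw [hy.1]
  rcases hσ with h | h <;> subst h <;> ring

/-- `z₁` lies on face `(j, σ)` iff that face is its own: then `n₁` is its projection. -/
lemma z₁_on_face (C : Ctx d L) {j : Fin d} {σ : ℤ} (hσ : σ = 1 ∨ σ = -1)
    (h : Face L j σ C.z₁) : j = C.p₁ ∧ σ = C.s₁ ∧ C.n₁ = Function.update C.z₁ j (σ * L) := by
  obtain ⟨h1, h2⟩ := face_coord_eq hσ C.hs₁ h C.z₁_face
  exact ⟨h1, h2, by rw [Ctx.n₁, h1, h2]⟩

lemma z₂_on_face (C : Ctx d L) {j : Fin d} {σ : ℤ} (hσ : σ = 1 ∨ σ = -1)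
    (h : Face L j σ C.z₂) : j = C.p₂ ∧ σ = C.s₂ ∧ C.n₂ = Function.update C.z₂ j (σ * L) := by
  obtain ⟨h1, h2⟩ := face_coord_eq hσ C.hs₂ h C.z₂_face
  exact ⟨h1, h2, by rw [Ctx.n₂, h1, h2]⟩

/-- In every face there is a good corner position: a face point `y`, avoiding the
obstacles and untrapped, whose projection is a good corner. -/
lemma exists_good_corner (C : Ctx d L) (j : Fin d) {σ : ℤ} (hσ : σ = 1 ∨ σ = -1) :
    ∃ y, Face L j σ y ∧ (∀ i, i ≠ j → y i = (L : ℤ) ∨ y i = -(L : ℤ)) ∧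
      y ≠ C.z₁ ∧ y ≠ C.z₂ ∧
      Function.update y j (σ * L) ≠ C.n₁ ∧ Function.update y j (σ * L) ≠ C.n₂ ∧
      C.Untrapped j σ y := by
  have hL2 : (2 : ℤ) ≤ (L : ℤ) := by have := C.hL; omega
  obtain ⟨a, b, hab, haj, hbj⟩ := two_other C.hd j
  -- the four candidates
  set cnd : ℤ → ℤ → (Fin d → ℤ) := fun ε η =>
    (fun i => if i = j then σ * ((L : ℤ) + 1) else if i = a then ε * L else if i = b then η * L
      else L) with hcnd
  have hcf : ∀ ε η, (ε = 1 ∨ ε = -1) → (η = 1 ∨ η = -1) → Face L j σ (cnd ε η) := by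
    intro ε η hε hη
    constructor
    · simp [hcnd]
    · intro i hij
      rcases hε with h | h <;> rcases hη with h' | h' <;> subst h <;> subst h' <;>
        (simp only [hcnd, if_neg hij]; split_ifs <;> rw [abs_le] <;> omega)
  have hca : ∀ ε η, cnd ε η a = ε * L := by
    intro ε η; simp [hcnd, if_neg haj]
  have hcb : ∀ ε η, cnd ε η b = η * L := by
    intro ε η; simp [hcnd, if_neg hbj, if_neg (Ne.symm hab)]
  have hinj : ∀ ε η ε' η', (ε = 1 ∨ ε = -1) → (η = 1 ∨ η = -1) → (ε' = 1 ∨ ε' = -1) →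
      (η' = 1 ∨ η' = -1) → cnd ε η = cnd ε' η' → ε = ε' ∧ η = η' := by
    intro ε η ε' η' hε hη hε' hη' h
    have h1 := congrFun h a
    have h2 := congrFun h b
    rw [hca, hca] at h1
    rw [hcb, hcb] at h2
    constructor
    · rcases hε with h' | h' <;> rcases hε' with h'' | h'' <;> subst h' <;> subst h'' <;> omega
    · rcases hη with h' | h' <;> rcases hη' with h'' | h'' <;> subst h' <;> subst h'' <;> omega
  set ge : Fin 4 → ℤ := fun i => if i.val ≤ 1 then 1 else -1 with hgedef
  set gh : Fin 4 → ℤ := fun i => if i.val % 2 = 0 then 1 else -1 with hghdef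
  set g : Fin 4 → (Fin d → ℤ) := fun i => cnd (ge i) (gh i) with hgdef
  have hge : ∀ i, ge i = 1 ∨ ge i = -1 := by
    intro i; unfold ge; split_ifs <;> simp
  have hgh : ∀ i, gh i = 1 ∨ gh i = -1 := by
    intro i; unfold gh; split_ifs <;> simp
  have hgface : ∀ i, Face L j σ (g i) := fun i => hcf _ _ (hge i) (hgh i)
  have hcode : ∀ i i' : Fin 4, ge i = ge i' → gh i = gh i' → i = i' := by
    intro i i' e1 e2
    have hi := i.isLt
    have hi' := i'.isLt
    unfold ge at e1
    unfold gh at e2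
    apply Fin.ext
    split_ifs at e1 e2 <;> omega
  have hginj : Function.Injective g := by
    intro i i' h
    obtain ⟨e1, e2⟩ := hinj _ _ _ _ (hge i) (hgh i) (hge i') (hgh i') h
    exact hcode i i' e1 e2
  -- the three kill reasons
  set R : Fin 3 → (Fin d → ℤ) → Prop := fun t y =>
    if t.val = 0 then (y = C.z₁ ∨ Function.update y j (σ * L) = C.n₁)
    else if t.val = 1 then (y = C.z₂ ∨ Function.update y j (σ * L) = C.n₂)
    else ((ZdGraph d).Adj C.z₁ y ∧ (ZdGraph d).Adj C.z₂ y) with hRdef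
  have sub1 : ∀ y y', Face L j σ y → Face L j σ y' →
      (y = C.z₁ ∨ Function.update y j (σ * L) = C.n₁) →
      (y' = C.z₁ ∨ Function.update y' j (σ * L) = C.n₁) → y = y' := by
    intro y y' hfy hfy' h h'
    rcases h with h | h <;> rcases h' with h' | h'
    · exact h.trans h'.symm
    · subst h
      obtain ⟨_, _, hn⟩ := C.z₁_on_face hσ hfy
      rw [hn] at h'
      exact (proj_inj C hfy' hfy h').symm
    · subst h'
      obtain ⟨_, _, hn⟩ := C.z₁_on_face hσ hfy'
      rw [hn] at h
      exact proj_inj C hfy hfy' h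
    · exact proj_inj C hfy hfy' (h.trans h'.symm)
  have sub2 : ∀ y y', Face L j σ y → Face L j σ y' →
      (y = C.z₂ ∨ Function.update y j (σ * L) = C.n₂) →
      (y' = C.z₂ ∨ Function.update y' j (σ * L) = C.n₂) → y = y' := by
    intro y y' hfy hfy' h h'
    rcases h with h | h <;> rcases h' with h' | h'
    · exact h.trans h'.symm
    · subst h
      obtain ⟨_, _, hn⟩ := C.z₂_on_face hσ hfy
      rw [hn] at h'
      exact (proj_inj C hfy' hfy h').symm
    · subst h'
      obtain ⟨_, _, hn⟩ := C.z₂_on_face hσ hfy'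
      rw [hn] at h
      exact proj_inj C hfy hfy' h
    · exact proj_inj C hfy hfy' (h.trans h'.symm)
  have hsub : ∀ t i i', R t (g i) → R t (g i') → i = i' := by
    intro t i i' h h'
    fin_cases t
    · simp only [hRdef] at h h'
      norm_num at h h'
      exact hginj (sub1 _ _ (hgface i) (hgface i') h h')
    · simp only [hRdef] at h h'
      norm_num at h h'
      exact hginj (sub2 _ _ (hgface i) (hgface i') h h')
    · simp only [hRdef] at h h'
      norm_num at h h'
      have c1 := adj_close h.1 a
      have c1' := adj_close h'.1 a
      have c2 := adj_close h.1 b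
      have c2' := adj_close h'.1 b
      rw [hgdef] at c1 c1' c2 c2'
      simp only [hca, hcb] at c1 c1' c2 c2'
      have b1 := abs_le.mp c1
      have b1' := abs_le.mp c1'
      have b2 := abs_le.mp c2
      have b2' := abs_le.mp c2'
      apply hcode
      · rcases hge i with e | e <;> rcases hge i' with e' | e' <;> rw [e] at b1 <;>
          rw [e'] at b1' <;> omega
      · rcases hgh i with e | e <;> rcases hgh i' with e' | e' <;> rw [e] at b2 <;>
          rw [e'] at b2' <;> omega
  obtain ⟨i, hi⟩ := pick_free g hginj R hsub (by norm_num)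
  have h0 := hi 0
  have h1 := hi 1
  have h2 := hi 2
  simp only [hRdef] at h0 h1 h2
  norm_num at h0 h1 h2
  push_neg at h0 h1
  refine ⟨g i, hgface i, ?_, h0.1, h1.1, h0.2, h1.2, ?_⟩
  · intro t htj
    rw [hgdef]
    simp only [hcnd]
    rw [if_neg htj]
    rcases hge i with e | e <;> rcases hgh i with e' | e' <;> rw [e, e'] <;> split_ifs <;> omega
  · -- untrapped : not both obstacles can be neighbours
    obtain ⟨w₁, w₂, hne, hf₁, hf₂, ha₁, ha₂⟩ := C.two_nbrs (hgface i)
    by_cases hw1 : w₁ = C.z₁ ∨ w₁ = C.z₂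
    · by_cases hw2 : w₂ = C.z₁ ∨ w₂ = C.z₂
      · exfalso
        have h2' : ¬((ZdGraph d).Adj C.z₁ (g i) ∧ (ZdGraph d).Adj C.z₂ (g i)) := by
          intro hc
          exact (hi 2) (by simp only [hRdef]; norm_num; exact hc)
        apply h2'
        rcases hw1 with h | h <;> rcases hw2 with h' | h'
        · exact absurd (h.trans h'.symm) hne
        · constructor
          · rw [← h]; exact ha₁.symm
          · rw [← h']; exact ha₂.symm
        · constructor
          · rw [← h']; exact ha₂.symm
          · rw [← h]; exact ha₁.symm
        · exact absurd (h.trans h'.symm) hne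
      · push_neg at hw2
        exact ⟨w₂, hf₂, hw2.1, hw2.2, ha₂⟩
    · push_neg at hw1
      exact ⟨w₁, hf₁, hw1.1, hw1.2, ha₁⟩


/-- Every point of `S` reaches a good corner. -/
lemma to_good (C : Ctx d L) {x : Fin d → ℤ} (hx : x ∈ C.S) :
    ∃ c, C.Good c ∧ Reach C.S x c := by
  rcases hx with hg | ⟨⟨j, σ, hσ, hf⟩, hz⟩
  · exact ⟨x, hg, Reach.refl (Or.inl hg)⟩
  · have hxz₁ : x ≠ C.z₁ := fun h => hz (Or.inl h)
    have hxz₂ : x ≠ C.z₂ := fun h => hz (Or.inr h)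
    have hL2 : (2 : ℤ) ≤ (L : ℤ) := by have := C.hL; omega
    by_cases hxu : C.Untrapped j σ x
    · obtain ⟨y, hfy, hyc, hyz₁, hyz₂, hn₁, hn₂, hyu⟩ := C.exists_good_corner j hσ
      set c := Function.update y j (σ * L) with hcdef
      have hcorner : Corner L c := by
        intro i
        by_cases hij : i = j
        · subst hij
          rw [hcdef, Function.update_self]
          rcases hσ with h | h <;> subst h
          · left; ring
          · right; ring
        · rw [hcdef, Function.update_of_ne hij]; exact hyc i hij
      have hgood : C.Good c := ⟨hcorner, hn₁, hn₂⟩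
      have hyS : y ∈ C.S := C.mem_S_face hσ hfy hyz₁ hyz₂
      have hcS : c ∈ C.S := Or.inl hgood
      exact ⟨c, hgood, (C.face_route hσ hf hfy hxz₁ hxz₂ hyz₁ hyz₂ hxu hyu).trans
        (Reach.step hyS hcS (adj_proj hσ hfy))⟩
    · -- trapped point : all face neighbours are obstacles, rescue through the corner below
      have hnb : ∀ w, Face L j σ w → (ZdGraph d).Adj x w → (w = C.z₁ ∨ w = C.z₂) := by
        intro w hfw hadj
        by_contra hc
        push_neg at hc
        exact hxu ⟨w, hfw, hc.1, hc.2, hadj⟩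
      obtain ⟨w₁, w₂, hne, hf₁, hf₂, ha₁, ha₂⟩ := C.two_nbrs hf
      have hzface : Face L j σ C.z₁ ∧ Face L j σ C.z₂ := by
        rcases hnb w₁ hf₁ ha₁ with h | h <;> rcases hnb w₂ hf₂ ha₂ with h' | h'
        · exact absurd (h.trans h'.symm) hne
        · exact ⟨h ▸ hf₁, h' ▸ hf₂⟩
        · exact ⟨h' ▸ hf₂, h ▸ hf₁⟩
        · exact absurd (h.trans h'.symm) hne
      have hxcorner : ∀ i, i ≠ j → x i = (L : ℤ) ∨ x i = -(L : ℤ) := by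
        intro i hij
        by_contra hcon
        push_neg at hcon
        have hbd := abs_le.mp (hf.2 i hij)
        obtain ⟨a, b, hab, haj, hbj⟩ := two_other C.hd j
        set i' := if i = a then b else a with hi'def
        have hi'j : i' ≠ j := by unfold i'; split_ifs <;> assumption
        have hi'i : i' ≠ i := by
          unfold i'
          split_ifs with h
          · rw [h]; exact Ne.symm hab
          · exact fun hh => h hh.symm
        have hxi' := abs_le.mp (hf.2 i' hi'j)
        set δ' : ℤ := if x i' ≤ 0 then 1 else -1 with hδ'def
        have hδ' : (x i' ≤ 0 ∧ δ' = 1) ∨ (0 < x i' ∧ δ' = -1) := by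
          unfold δ'; split_ifs <;> omega
        set wP := Function.update x i (x i + 1) with hwP
        set wM := Function.update x i (x i + (-1)) with hwM
        set w3 := Function.update x i' (x i' + δ') with hw3
        have hfP : Face L j σ wP := face_update hf hij (abs_le.mpr (by omega))
        have hfM : Face L j σ wM := face_update hf hij (abs_le.mpr (by omega))
        have hf3 : Face L j σ w3 := face_update hf hi'j (abs_le.mpr (by omega))
        have haP : (ZdGraph d).Adj x wP := adj_step x i (Or.inl rfl)
        have haM : (ZdGraph d).Adj x wM := adj_step x i (Or.inr rfl)
        have ha3 : (ZdGraph d).Adj x w3 := adj_step x i' (by omega)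
        have hPM : wP ≠ wM := by
          intro h
          have h2 := congrFun h i
          rw [hwP, hwM, Function.update_self, Function.update_self] at h2
          omega
        have hP3 : wP ≠ w3 := by
          intro h
          have h2 := congrFun h i
          rw [hwP, hw3, Function.update_self, Function.update_of_ne (Ne.symm hi'i)] at h2
          omega
        have hM3 : wM ≠ w3 := by
          intro h
          have h2 := congrFun h i
          rw [hwM, hw3, Function.update_self, Function.update_of_ne (Ne.symm hi'i)] at h2
          omega
        rcases hnb wP hfP haP with h | h <;> rcases hnb wM hfM haM with h' | h' <;>
          rcases hnb w3 hf3 ha3 with h'' | h''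
        · exact hPM (h.trans h'.symm)
        · exact hPM (h.trans h'.symm)
        · exact hP3 (h.trans h''.symm)
        · exact hM3 (h'.trans h''.symm)
        · exact hM3 (h'.trans h''.symm)
        · exact hP3 (h.trans h''.symm)
        · exact hPM (h.trans h'.symm)
        · exact hPM (h.trans h'.symm)
      set c := Function.update x j (σ * L) with hcdef
      have hcorner : Corner L c := by
        intro i
        by_cases hij : i = j
        · subst hij
          rw [hcdef, Function.update_self]
          rcases hσ with h | h <;> subst h
          · left; ring
          · right; ring
        · rw [hcdef, Function.update_of_ne hij]; exact hxcorner i hij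
      have hcn₁ : c ≠ C.n₁ := by
        intro h
        obtain ⟨_, _, hn⟩ := C.z₁_on_face hσ hzface.1
        rw [hcdef, hn] at h
        exact hxz₁ (proj_inj C hf hzface.1 h)
      have hcn₂ : c ≠ C.n₂ := by
        intro h
        obtain ⟨_, _, hn⟩ := C.z₂_on_face hσ hzface.2
        rw [hcdef, hn] at h
        exact hxz₂ (proj_inj C hf hzface.2 h)
      have hgood : C.Good c := ⟨hcorner, hcn₁, hcn₂⟩
      exact ⟨c, hgood, Reach.step (C.mem_S_face hσ hf hxz₁ hxz₂) (Or.inl hgood)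
        (adj_proj hσ hf)⟩

/-- Wiring two good corners that agree in some coordinate other than `p₁`. -/
lemma wire_share (C : Ctx d L) {c c' : Fin d → ℤ} (hc : C.Good c) (hc' : C.Good c')
    {r : Fin d} (hr : r ≠ C.p₁) (hcc' : c r = c' r) : Reach C.S c c' := by
  have hL2 : (2 : ℤ) ≤ (L : ℤ) := by have := C.hL; omega
  obtain ⟨σr, hσr, hcrr⟩ : ∃ σr, (σr = 1 ∨ σr = -1) ∧ c r = σr * L := by
    rcases hc.1 r with h | h
    · exact ⟨1, Or.inl rfl, by omega⟩
    · exact ⟨-1, Or.inr rfl, by omega⟩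
  set bb := Function.update c r (σr * ((L : ℤ) + 1)) with hbbdef
  set bb' := Function.update c' r (σr * ((L : ℤ) + 1)) with hbb'def
  have hfb : Face L r σr bb := by
    constructor
    · rw [hbbdef, Function.update_self]
    · intro i hir
      rw [hbbdef, Function.update_of_ne hir]
      rcases hc.1 i with h | h <;> rw [h] <;> rw [abs_le] <;> omega
  have hcrr' : c' r = σr * L := by rw [← hcc']; exact hcrr
  have hfb' : Face L r σr bb' := by
    constructor
    · rw [hbb'def, Function.update_self]
    · intro i hir
      rw [hbb'def, Function.update_of_ne hir]
      rcases hc'.1 i with h | h <;> rw [h] <;> rw [abs_le] <;> omega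
  have hz₁notface : ¬ Face L r σr C.z₁ := by
    intro h
    exact hr (face_coord_eq hσr C.hs₁ h C.z₁_face).1
  have key₁ : ∀ c₀ : Fin d → ℤ, Function.update c₀ r (σr * ((L : ℤ) + 1)) ≠ C.z₁ := by
    intro c₀ h
    have h2 : C.z₁ r = σr * ((L : ℤ) + 1) := by rw [← h, Function.update_self]
    have h3 := abs_le.mp (C.hzo₁ r hr)
    rcases hσr with e | e <;> rw [e] at h2 <;> omega
  have key₂ : ∀ c₀ : Fin d → ℤ, C.Good c₀ → c₀ r = σr * L →
      Function.update c₀ r (σr * ((L : ℤ) + 1)) ≠ C.z₂ := by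
    intro c₀ hc₀ hc₀r h
    by_cases hrp₂ : r = C.p₂
    · apply hc₀.2.2
      have hs : σr = C.s₂ := by
        have h2 : C.z₂ r = σr * ((L : ℤ) + 1) := by rw [← h, Function.update_self]
        have h3 := C.hzp₂
        rw [← hrp₂] at h3
        rcases hσr with e | e <;> rcases C.hs₂ with e' | e' <;> rw [e] at h2 <;>
          rw [e'] at h3 <;> omega
      have hn : C.n₂ = Function.update C.z₂ r (C.s₂ * L) := by rw [Ctx.n₂, hrp₂]
      rw [hn, ← h, Function.update_idem, ← hs, ← hc₀r, Function.update_eq_self]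
    · have h2 : C.z₂ r = σr * ((L : ℤ) + 1) := by rw [← h, Function.update_self]
      have h3 := abs_le.mp (C.hzo₂ r hrp₂)
      rcases hσr with e | e <;> rw [e] at h2 <;> omega
  have hbz₁ : bb ≠ C.z₁ := key₁ c
  have hbz₂ : bb ≠ C.z₂ := key₂ c hc hcrr
  have hb'z₁ : bb' ≠ C.z₁ := key₁ c'
  have hb'z₂ : bb' ≠ C.z₂ := key₂ c' hc' hcrr'
  have hub : C.Untrapped r σr bb := C.untrapped_of hfb (fun hh => hz₁notface hh.1)
  have hub' : C.Untrapped r σr bb' := C.untrapped_of hfb' (fun hh => hz₁notface hh.1)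
  have hadjc : (ZdGraph d).Adj c bb := by
    rw [hbbdef]
    apply adj_of_update
    rw [hcrr]
    rcases hσr with e | e <;> rw [e] <;> ring
  have hadjc' : (ZdGraph d).Adj c' bb' := by
    rw [hbb'def]
    apply adj_of_update
    rw [hcrr']
    rcases hσr with e | e <;> rw [e] <;> ring
  have hcS : c ∈ C.S := Or.inl hc
  have hc'S : c' ∈ C.S := Or.inl hc'
  have hbS : bb ∈ C.S := C.mem_S_face hσr hfb hbz₁ hbz₂
  have hb'S : bb' ∈ C.S := C.mem_S_face hσr hfb' hb'z₁ hb'z₂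
  exact (Reach.step hcS hbS hadjc).trans
    ((C.face_route hσr hfb hfb' hbz₁ hbz₂ hb'z₁ hb'z₂ hub hub').trans
      (Reach.step hc'S hb'S hadjc').symm)

/-- Any two good corners are connected in `S`. -/
lemma wire (C : Ctx d L) {c c' : Fin d → ℤ} (hc : C.Good c) (hc' : C.Good c') :
    Reach C.S c c' := by
  by_cases hsh : ∃ r, r ≠ C.p₁ ∧ c r = c' r
  · obtain ⟨r, h1, h2⟩ := hsh
    exact C.wire_share hc hc' h1 h2
  · push_neg at hsh
    obtain ⟨a, b, hab, hap, hbp⟩ := two_other C.hd C.p₁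
    have hL1 : (1 : ℤ) ≤ (L : ℤ) := by have := C.hL; omega
    have hopp : ∀ r, r ≠ C.p₁ → c' r = -(c r) := by
      intro r hr
      have h := hsh r hr
      rcases hc.1 r with h' | h' <;> rcases hc'.1 r with h'' | h'' <;> omega
    set g0 := Function.update c a (-(c a)) with hg0
    set g1 := Function.update c b (-(c b)) with hg1
    set g2 := Function.update g0 C.p₁ (-(c C.p₁)) with hg2
    have hg0a : g0 a = -(c a) := by rw [hg0, Function.update_self]
    have hg0b : g0 b = c b := by rw [hg0, Function.update_of_ne (Ne.symm hab)]
    have hg0p : g0 C.p₁ = c C.p₁ := by rw [hg0, Function.update_of_ne (Ne.symm hap)]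
    have hg1a : g1 a = c a := by rw [hg1, Function.update_of_ne hab]
    have hg1b : g1 b = -(c b) := by rw [hg1, Function.update_self]
    have hg2p : g2 C.p₁ = -(c C.p₁) := by rw [hg2, Function.update_self]
    have hg2a : g2 a = -(c a) := by rw [hg2, Function.update_of_ne hap, hg0a]
    have hg2b : g2 b = c b := by rw [hg2, Function.update_of_ne hbp, hg0b]
    have hcor0 : Corner L g0 := by
      intro i
      by_cases hia : i = a
      · rw [hia, hg0, Function.update_self]; rcases hc.1 a with h | h <;> rw [h] <;> omega
      · rw [hg0, Function.update_of_ne hia]; exact hc.1 i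
    have hcor1 : Corner L g1 := by
      intro i
      by_cases hib : i = b
      · rw [hib, hg1, Function.update_self]; rcases hc.1 b with h | h <;> rw [h] <;> omega
      · rw [hg1, Function.update_of_ne hib]; exact hc.1 i
    have hcor2 : Corner L g2 := by
      intro i
      by_cases hip : i = C.p₁
      · rw [hip, hg2, Function.update_self]; rcases hc.1 C.p₁ with h | h <;> rw [h] <;> omega
      · rw [hg2, Function.update_of_ne hip]; exact hcor0 i
    have h01 : g0 ≠ g1 := by
      intro h
      have h2 := congrFun h a
      rw [hg0a, hg1a] at h2
      rcases hc.1 a with h' | h' <;> omega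
    have h02 : g0 ≠ g2 := by
      intro h
      have h2 := congrFun h C.p₁
      rw [hg0p, hg2p] at h2
      rcases hc.1 C.p₁ with h' | h' <;> omega
    have h12 : g1 ≠ g2 := by
      intro h
      have h2 := congrFun h a
      rw [hg1a, hg2a] at h2
      rcases hc.1 a with h' | h' <;> omega
    have route : ∀ g : Fin d → ℤ, C.Good g → g a = -(c a) → g b = c b →
        Reach C.S c c' := by
      intro g hgood hga hgb
      have step1 : Reach C.S c g := C.wire_share hc hgood hbp (by rw [hgb])
      have step2 : Reach C.S g c' := C.wire_share hgood hc' hap (by rw [hga, hopp a hap])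
      exact step1.trans step2
    have route' : ∀ g : Fin d → ℤ, C.Good g → g a = c a → g b = -(c b) →
        Reach C.S c c' := by
      intro g hgood hga hgb
      have step1 : Reach C.S c g := C.wire_share hc hgood hap (by rw [hga])
      have step2 : Reach C.S g c' := C.wire_share hgood hc' hbp (by rw [hgb, hopp b hbp])
      exact step1.trans step2
    by_cases h0 : g0 ≠ C.n₁ ∧ g0 ≠ C.n₂
    · exact route g0 ⟨hcor0, h0.1, h0.2⟩ hg0a hg0b
    · by_cases h1 : g1 ≠ C.n₁ ∧ g1 ≠ C.n₂
      · exact route' g1 ⟨hcor1, h1.1, h1.2⟩ hg1a hg1b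
      · have h0' : g0 = C.n₁ ∨ g0 = C.n₂ := by
          by_cases hh : g0 = C.n₁
          · exact Or.inl hh
          · push_neg at h0; exact Or.inr (h0 hh)
        have h1' : g1 = C.n₁ ∨ g1 = C.n₂ := by
          by_cases hh : g1 = C.n₁
          · exact Or.inl hh
          · push_neg at h1; exact Or.inr (h1 hh)
        have hg2good : C.Good g2 := by
          refine ⟨hcor2, ?_, ?_⟩
          · intro hh
            rcases h0' with e | e
            · exact h02 (e.trans hh.symm)
            · rcases h1' with e' | e'
              · exact h12 (e'.trans hh.symm)
              · exact h01 (e.trans e'.symm)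
          · intro hh
            rcases h0' with e | e
            · rcases h1' with e' | e'
              · exact h01 (e.trans e'.symm)
              · exact h12 (e'.trans hh.symm)
            · exact h02 (e.trans hh.symm)
        exact route g2 hg2good hg2a hg2b

end Ctx

end FaceMoves

section Assembly

variable {d : ℕ}

lemma bd_struct {L : ℕ} {z : Fin d → ℤ}
    (hnK : ¬ ∀ i, |z i| ≤ (L : ℤ)) {y : Fin d → ℤ} (hyK : ∀ i, |y i| ≤ (L : ℤ))
    (hadj : (ZdGraph d).Adj z y) :
    ∃ (p : Fin d) (s : ℤ), (s = 1 ∨ s = -1) ∧ z p = s * ((L : ℤ) + 1) ∧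
      ∀ q, q ≠ p → |z q| ≤ (L : ℤ) := by
  rw [adj_iff] at hadj
  obtain ⟨t, hsq, hrest⟩ := hadj
  push_neg at hnK
  obtain ⟨i, hi⟩ := hnK
  have hit : i = t := by
    by_contra h
    rw [hrest i h] at hi
    exact absurd (hyK i) (not_le.mpr hi)
  subst hit
  have h1 : z i - y i = 1 ∨ z i - y i = -1 := by
    rw [pow_two] at hsq
    rcases mul_self_eq_one_iff.mp hsq with h | h <;> omega
  have h2 := abs_le.mp (hyK i)
  have h3 := lt_abs.mp hi
  refine ⟨i, if 0 ≤ z i then 1 else -1, by split_ifs <;> simp, by split_ifs <;> omega, ?_⟩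
  intro q hq
  rw [hrest q hq]
  exact hyK q

lemma bd_to_face {L : ℕ} {w : Fin d → ℤ}
    (h : w ∈ {x : Fin d → ℤ | x ∉ {y : Fin d → ℤ | ∀ i, |y i| ≤ (L : ℤ)} ∧
      ∃ y ∈ {y : Fin d → ℤ | ∀ i, |y i| ≤ (L : ℤ)}, (ZdGraph d).Adj x y}) :
    ∃ j σ, (σ = 1 ∨ σ = -1) ∧ Face L j σ w := by
  obtain ⟨hnK, y, hyK, hadj⟩ := h
  obtain ⟨p, s, hs, hzp, hzo⟩ := bd_struct hnK hyK hadj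
  exact ⟨p, s, hs, hzp, hzo⟩

lemma face_to_bd {L : ℕ} {w : Fin d → ℤ} {j : Fin d} {σ : ℤ}
    (hσ : σ = 1 ∨ σ = -1) (hf : Face L j σ w) :
    w ∈ {x : Fin d → ℤ | x ∉ {y : Fin d → ℤ | ∀ i, |y i| ≤ (L : ℤ)} ∧
      ∃ y ∈ {y : Fin d → ℤ | ∀ i, |y i| ≤ (L : ℤ)}, (ZdGraph d).Adj x y} := by
  constructor
  · intro hK
    have h1 := hK j
    have h2 := face_big hσ hf
    omega
  · refine ⟨Function.update w j (σ * L), ?_, Ctx.adj_proj hσ hf⟩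
    intro i
    by_cases hij : i = j
    · subst hij
      rw [Function.update_self]
      rcases hσ with h | h <;> subst h <;> rw [abs_le] <;> constructor <;> omega
    · rw [Function.update_of_ne hij]
      exact hf.2 i hij

end Assembly

end ExCor

/-- For `K = B(0, L)` (`L ≥ 100`) and distinct points `z₁, z₂` of the exterior
boundary of `K`, there is `U ⊆ K ∪ {z₁, z₂}` containing a nearest-neighbor
path from `z₁` to `z₂` such that `K̄ \ U` is connected. -/
theorem exists_corridor (d : ℕ) (hd : 3 ≤ d) (L : ℕ) (hL : 100 ≤ L)
    (z₁ z₂ : Fin d → ℤ) (hne : z₁ ≠ z₂)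
    (hz₁ : z₁ ∈ {x : Fin d → ℤ | x ∉ {y : Fin d → ℤ | ∀ i, |y i| ≤ (L : ℤ)} ∧
      ∃ y ∈ {y : Fin d → ℤ | ∀ i, |y i| ≤ (L : ℤ)}, (ZdGraph d).Adj x y})
    (hz₂ : z₂ ∈ {x : Fin d → ℤ | x ∉ {y : Fin d → ℤ | ∀ i, |y i| ≤ (L : ℤ)} ∧
      ∃ y ∈ {y : Fin d → ℤ | ∀ i, |y i| ≤ (L : ℤ)}, (ZdGraph d).Adj x y}) :
    ∃ U : Set (Fin d → ℤ),
      U ⊆ {y : Fin d → ℤ | ∀ i, |y i| ≤ (L : ℤ)} ∪ {z₁, z₂} ∧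
      (∃ (l : ℕ) (τ : ℕ → Fin d → ℤ), τ 0 = z₁ ∧ τ l = z₂ ∧
        (∀ i < l, (ZdGraph d).Adj (τ i) (τ (i + 1))) ∧ ∀ i ≤ l, τ i ∈ U) ∧
      ((ZdGraph d).induce
        (({y : Fin d → ℤ | ∀ i, |y i| ≤ (L : ℤ)} ∪
          {x : Fin d → ℤ | x ∉ {y : Fin d → ℤ | ∀ i, |y i| ≤ (L : ℤ)} ∧
            ∃ y ∈ {y : Fin d → ℤ | ∀ i, |y i| ≤ (L : ℤ)}, (ZdGraph d).Adj x y}) \ U)).Connected := by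
  classical
  obtain ⟨hz₁K, y₁, hy₁K, hadj₁⟩ := hz₁
  obtain ⟨hz₂K, y₂, hy₂K, hadj₂⟩ := hz₂
  obtain ⟨p₁, s₁, hs₁, hzp₁, hzo₁⟩ := ExCor.bd_struct hz₁K hy₁K hadj₁
  obtain ⟨p₂, s₂, hs₂, hzp₂, hzo₂⟩ := ExCor.bd_struct hz₂K hy₂K hadj₂
  set C : ExCor.Ctx d L := ⟨hd, hL, z₁, z₂, p₁, p₂, s₁, s₂, hs₁, hs₂, hzp₁, hzp₂, hzo₁, hzo₂⟩
    with hC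
  have hL2 : (2 : ℤ) ≤ (L : ℤ) := by omega
  set U : Set (Fin d → ℤ) := {w | (∀ i, |w i| ≤ (L : ℤ)) ∧ ¬ C.Good w} ∪ {z₁, z₂} with hU
  have hn₁ : C.n₁ = Function.update z₁ p₁ (s₁ * L) := rfl
  have hn₂ : C.n₂ = Function.update z₂ p₂ (s₂ * L) := rfl
  have hn₁K : ∀ i, |C.n₁ i| ≤ (L : ℤ) := by
    intro i
    rw [hn₁]
    by_cases hip : i = p₁
    · subst hip
      rw [Function.update_self]
      rcases hs₁ with e | e <;> subst e <;> rw [abs_le] <;> constructor <;> omega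
    · rw [Function.update_of_ne hip]
      exact hzo₁ i hip
  have hn₂K : ∀ i, |C.n₂ i| ≤ (L : ℤ) := by
    intro i
    rw [hn₂]
    by_cases hip : i = p₂
    · subst hip
      rw [Function.update_self]
      rcases hs₂ with e | e <;> subst e <;> rw [abs_le] <;> constructor <;> omega
    · rw [Function.update_of_ne hip]
      exact hzo₂ i hip
  have hz₁U : z₁ ∈ U := Or.inr (Or.inl rfl)
  have hz₂U : z₂ ∈ U := Or.inr (Or.inr rfl)
  have hmemKU : ∀ w, (∀ i, |w i| ≤ (L : ℤ)) → ¬ C.Good w → w ∈ U :=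
    fun w h1 h2 => Or.inl ⟨h1, h2⟩
  have hn₁U : C.n₁ ∈ U := hmemKU _ hn₁K (fun hg => hg.2.1 rfl)
  have hn₂U : C.n₂ ∈ U := hmemKU _ hn₂K (fun hg => hg.2.2 rfl)
  have hadjz₁ : (ZdGraph d).Adj z₁ C.n₁ := by
    rw [hn₁]
    apply ExCor.adj_of_update
    rw [hzp₁]
    rcases hs₁ with e | e <;> subst e <;> ring
  have hadjz₂ : (ZdGraph d).Adj z₂ C.n₂ := by
    rw [hn₂]
    apply ExCor.adj_of_update
    rw [hzp₂]
    rcases hs₂ with e | e <;> subst e <;> ring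
  have hdive : ∀ n : Fin d → ℤ, (∀ i, |n i| ≤ (L : ℤ)) → n ∈ U →
      ExCor.Reach U n (fun _ => 0) := by
    intro n hnK hnU
    apply ExCor.box_reach
    intro w hw
    by_cases hwg : C.Good w
    · -- then w would be the corner n itself, but corners in U are excluded... w = n
      have hwn : w = n := by
        funext i
        have hb := hw i
        unfold ExCor.Btw at hb
        have h1 := abs_le.mp (hnK i)
        rcases hwg.1 i with h | h <;> omega
      rw [hwn]
      exact hnU
    · refine hmemKU w ?_ hwg
      intro i
      have hb := hw i
      unfold ExCor.Btw at hb
      have := abs_le.mp (hnK i)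
      rw [abs_le]
      omega
  have hRch : ExCor.Reach U z₁ z₂ :=
    ((ExCor.Reach.step hz₁U hn₁U hadjz₁).trans (hdive C.n₁ hn₁K hn₁U)).trans
      (((ExCor.Reach.step hz₂U hn₂U hadjz₂).trans (hdive C.n₂ hn₂K hn₂U)).symm)
  refine ⟨U, ?_, ?_, ?_⟩
  · rintro w (⟨h1, _⟩ | h)
    · exact Or.inl h1
    · exact Or.inr h
  · obtain ⟨hu1, hu2, hr⟩ := hRch
    obtain ⟨wk⟩ := hr
    refine ⟨wk.length, fun n => (wk.getVert n).1, ?_, ?_, ?_, ?_⟩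
    · show (wk.getVert 0).1 = z₁
      rw [SimpleGraph.Walk.getVert_zero]
    · show (wk.getVert wk.length).1 = z₂
      rw [SimpleGraph.Walk.getVert_length]
    · intro i hi
      exact wk.adj_getVert_succ hi
    · intro i _
      exact (wk.getVert i).2
  · have hSeq : (({y : Fin d → ℤ | ∀ i, |y i| ≤ (L : ℤ)} ∪
        {x : Fin d → ℤ | x ∉ {y : Fin d → ℤ | ∀ i, |y i| ≤ (L : ℤ)} ∧
          ∃ y ∈ {y : Fin d → ℤ | ∀ i, |y i| ≤ (L : ℤ)}, (ZdGraph d).Adj x y}) \ U) = C.S := by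
      ext w
      constructor
      · rintro ⟨hKB, hwU⟩
        have hnz₁ : w ≠ z₁ := fun h => hwU (by rw [h]; exact hz₁U)
        have hnz₂ : w ≠ z₂ := fun h => hwU (by rw [h]; exact hz₂U)
        rcases hKB with hK | hB
        · by_cases hg : C.Good w
          · exact Or.inl hg
          · exact absurd (Or.inl ⟨hK, hg⟩ : w ∈ U) hwU
        · refine Or.inr ⟨ExCor.bd_to_face hB, ?_⟩
          rintro (h | h)
          · exact hnz₁ h
          · exact hnz₂ h
      · intro hS
        rcases hS with hg | ⟨⟨j, σ, hσ, hf⟩, hnz⟩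
        · have hK : ∀ i, |w i| ≤ (L : ℤ) := by
            intro i
            rcases hg.1 i with h | h <;> rw [h, abs_le] <;> constructor <;> omega
          refine ⟨Or.inl hK, ?_⟩
          rintro (⟨_, hng⟩ | h)
          · exact hng hg
          · rcases h with h | h
            · exact hz₁K (by rw [← h]; exact hK)
            · exact hz₂K (by rw [← h]; exact hK)
        · refine ⟨Or.inr (ExCor.face_to_bd hσ hf), ?_⟩
          rintro (⟨hK, _⟩ | h)
          · have h1 := ExCor.face_big hσ hf
            have h2 := hK j
            omega
          · rcases h with h | h
            · exact hnz (Or.inl h)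
            · exact hnz (Or.inr h)
    rw [hSeq, SimpleGraph.connected_iff]
    refine ⟨?_, ?_⟩
    · intro u v
      obtain ⟨cu, hcu, hru⟩ := C.to_good u.2
      obtain ⟨cv, hcv, hrv⟩ := C.to_good v.2
      obtain ⟨h1, h2, hr⟩ := hru.trans ((C.wire hcu hcv).trans hrv.symm)
      have e1 : u = ⟨u.1, h1⟩ := Subtype.ext rfl
      have e2 : v = ⟨v.1, h2⟩ := Subtype.ext rfl
      rw [e1, e2]
      exact hr
    · obtain ⟨y, hfy, _, hyz₁, hyz₂, _, _, _⟩ := C.exists_good_corner C.p₁ C.hs₁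
      exact ⟨⟨y, C.mem_S_face C.hs₁ hfy hyz₁ hyz₂⟩⟩
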